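/- Let G be a profinite group such that |G/K : Φ(G/K)| ≤ f for every open normal subgroup K of G, where f is a fixed constant. Then G has an open normal subgroup N of index at most f such that N is pro-(finite nilpotent). -/

import Mathlib

open Subgroup

/-- The preimage in `G` of the Frattini subgroup of `G ⧸ K`. -/
private def frattiniPre {G : Type*} [Group G] (K : Subgroup G) [K.Normal] : Subgroup G :=
  (frattini (G ⧸ K)).comap (QuotientGroup.mk' K)

private instance frattiniPre_normal {G : Type*} [Group G] (K : Subgroup G) [K.Normal] :
    (frattiniPre K).Normal :=
  Subgroup.normal_comap _

private lemma le_frattiniPre {G : Type*} [Group G] (K : Subgroup G) [K.Normal] :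
    K ≤ frattiniPre K := by
  intro x hx
  simp only [frattiniPre, Subgroup.mem_comap]
  have : QuotientGroup.mk' K x = 1 := by
    simpa [QuotientGroup.eq_one_iff] using hx
  rw [this]
  exact one_mem _

private lemma frattiniPre_mono {G : Type*} [Group G] (K K' : Subgroup G) [K.Normal]
    [K'.Normal] (hle : K' ≤ K) : frattiniPre K' ≤ frattiniPre K := by
  have hle' : K' ≤ K.comap (MonoidHom.id G) := hle
  set φ : G ⧸ K' →* G ⧸ K := QuotientGroup.map K' K (MonoidHom.id G) hle'
  have hφ : Function.Surjective φ := by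
    intro y
    obtain ⟨x, rfl⟩ := QuotientGroup.mk_surjective y
    exact ⟨QuotientGroup.mk x, by simp [φ, QuotientGroup.map_mk]⟩
  have key : frattini (G ⧸ K') ≤ (frattini (G ⧸ K)).comap φ :=
    frattini_le_comap_frattini_of_surjective hφ
  have hcomp : φ.comp (QuotientGroup.mk' K') = QuotientGroup.mk' K := by
    ext x
    simp [φ, QuotientGroup.map_mk]
  calc frattiniPre K' ≤ ((frattini (G ⧸ K)).comap φ).comap (QuotientGroup.mk' K') :=
        Subgroup.comap_mono key
    _ = frattiniPre K := by
        rw [Subgroup.comap_comap, hcomp]; rfl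

private lemma frattiniPre_index {G : Type*} [Group G] (K : Subgroup G) [K.Normal] :
    (frattiniPre K).index = (frattini (G ⧸ K)).index :=
  Subgroup.index_comap_of_surjective _ (QuotientGroup.mk'_surjective K)

/-- Let `G` be a profinite group such that `|G/K : Φ(G/K)| ≤ f` for every open normal
subgroup `K`. Then `G` has an open normal subgroup `N` of index at most `f` that is
pro-(finite nilpotent), i.e. `N/(K ∩ N)` is nilpotent for every open normal `K ⊴ G`. -/
theorem profinite_open_normal_pronilpotent {G : Type*} [Group G] [TopologicalSpace G]
    [IsTopologicalGroup G] [CompactSpace G] [TotallyDisconnectedSpace G] [T2Space G]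
    (f : ℕ)
    (h : ∀ (K : Subgroup G) [K.Normal], IsOpen (K : Set G) →
      (frattini (G ⧸ K)).index ≤ f) :
    ∃ N : Subgroup G, N.Normal ∧ IsOpen (N : Set G) ∧ N.index ≤ f ∧
      ∀ (K : Subgroup G) [K.Normal], IsOpen (K : Set G) →
        Group.IsNilpotent (↥N ⧸ K.subgroupOf N) := by
  classical
  -- the set of indices of the Frattini preimages
  set S : Set ℕ := {n | ∃ (K : Subgroup G) (_ : K.Normal), IsOpen (K : Set G) ∧
    (frattiniPre K).index = n} with hS
  have htop : IsOpen ((⊤ : Subgroup G) : Set G) := by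
    rw [Subgroup.coe_top]; exact isOpen_univ
  have hS_ne : S.Nonempty := ⟨(frattiniPre (⊤ : Subgroup G)).index, ⊤, inferInstance, htop, rfl⟩
  have hS_bdd : BddAbove S := by
    refine ⟨f, fun n hn => ?_⟩
    obtain ⟨K, _, hKopen, rfl⟩ := hn
    rw [frattiniPre_index]
    exact h K hKopen
  obtain ⟨K₀, instK₀, hK₀open, hK₀idx⟩ := Nat.sSup_mem hS_ne hS_bdd
  set m := sSup S with hm
  -- openness of Frattini preimages
  have hPreOpen : ∀ (K : Subgroup G) [K.Normal], IsOpen (K : Set G) →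
      IsOpen ((frattiniPre K : Set G)) := fun K _ hK =>
    Subgroup.isOpen_mono (le_frattiniPre K) hK
  refine ⟨frattiniPre K₀, inferInstance, hPreOpen K₀ hK₀open, ?_, ?_⟩
  · rw [frattiniPre_index]; exact h K₀ hK₀open
  · intro K instK hKopen
    -- the key step: `frattiniPre K₀ ≤ frattiniPre K`
    have hinter : IsOpen ((K ⊓ K₀ : Subgroup G) : Set G) := by
      rw [Subgroup.coe_inf]; exact hKopen.inter hK₀open
    have h1 : frattiniPre (K ⊓ K₀) ≤ frattiniPre K₀ :=
      frattiniPre_mono _ _ inf_le_right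
    have h2 : frattiniPre (K ⊓ K₀) ≤ frattiniPre K :=
      frattiniPre_mono _ _ inf_le_left
    have hfin : Finite (G ⧸ frattiniPre (K ⊓ K₀)) :=
      Subgroup.quotient_finite_of_isOpen _ (hPreOpen _ hinter)
    have hne : (frattiniPre (K ⊓ K₀)).index ≠ 0 :=
      Subgroup.index_ne_zero_of_finite
    have hle_m : (frattiniPre (K ⊓ K₀)).index ≤ m :=
      le_csSup hS_bdd ⟨K ⊓ K₀, inferInstance, hinter, rfl⟩
    have hrel : (frattiniPre (K ⊓ K₀)).relIndex (frattiniPre K₀) * m =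
        (frattiniPre (K ⊓ K₀)).index := by
      rw [← hK₀idx] at hm ⊢
      exact Subgroup.relIndex_mul_index h1
    have hm_ne : m ≠ 0 := by
      intro h0
      rw [h0, mul_zero] at hrel
      exact hne hrel.symm
    have hrel1 : (frattiniPre (K ⊓ K₀)).relIndex (frattiniPre K₀) = 1 := by
      have hrle : (frattiniPre (K ⊓ K₀)).relIndex (frattiniPre K₀) * m ≤ 1 * m := by
        rw [one_mul, hrel]; exact hle_m
      have := Nat.le_of_mul_le_mul_right hrle (Nat.pos_of_ne_zero hm_ne)
      have hrne : (frattiniPre (K ⊓ K₀)).relIndex (frattiniPre K₀) ≠ 0 := by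
        intro h0
        rw [h0, zero_mul] at hrel
        exact hne hrel.symm
      omega
    have hNle : frattiniPre K₀ ≤ frattiniPre (K ⊓ K₀) :=
      Subgroup.relIndex_eq_one.mp hrel1
    have hNK : frattiniPre K₀ ≤ frattiniPre K := le_trans hNle h2
    -- now nilpotency
    haveI : Finite (G ⧸ K) := Subgroup.quotient_finite_of_isOpen K hKopen
    haveI : Group.IsNilpotent ↥(frattini (G ⧸ K)) := frattini_nilpotent
    set N := frattiniPre K₀ with hN
    have hmem : ∀ x : ↥N, ((QuotientGroup.mk' K).comp N.subtype) x ∈ frattini (G ⧸ K) :=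
      fun x => hNK x.2
    set ψ : ↥N →* ↥(frattini (G ⧸ K)) :=
      ((QuotientGroup.mk' K).comp N.subtype).codRestrict _ hmem with hψ
    have hker : ψ.ker = K.subgroupOf N := by
      ext x
      simp only [hψ, MonoidHom.ker_codRestrict, MonoidHom.mem_ker, MonoidHom.comp_apply,
        Subgroup.mem_subgroupOf, Subgroup.coe_subtype]
      exact QuotientGroup.eq_one_iff _
    haveI : (K.subgroupOf N).Normal := instK.subgroupOf N
    have e : (↥N ⧸ K.subgroupOf N) ≃* ψ.range :=
      (QuotientGroup.quotientMulEquivOfEq hker.symm).trans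
        (QuotientGroup.quotientKerEquivRange ψ)
    exact nilpotent_of_mulEquiv e.symm
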